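/- Let P be an orthogonal projection on ℂ^E and L Hermitian with P^⊥ L P^⊥ = L. Then as k → ∞ along the reals, the scattering matrix S(k) = -(P + L + ik P^⊥)^{-1}(P + L - ik P^⊥) converges to 1 - 2P. -/

import Mathlib

open Matrix Complex Filter

attribute [local instance] Matrix.normedAddCommGroup

/-- As `k → ∞` along the reals, the scattering matrix
`S(k) = -(P + L + ik P^⊥)⁻¹ (P + L - ik P^⊥)` converges to `1 - 2P`. -/
theorem scattering_matrix_limit
    (E : ℕ) (P L : Matrix (Fin E) (Fin E) ℂ)
    (hP : P.IsHermitian) (hP2 : P * P = P)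
    (hL : L.IsHermitian) (hLP : (1 - P) * L * (1 - P) = L) :
    Tendsto
      (fun k : ℝ =>
        -((P + L + (Complex.I * (k : ℂ)) • (1 - P))⁻¹
            * (P + L - (Complex.I * (k : ℂ)) • (1 - P))))
      atTop (nhds (1 - 2 • P)) := by
  set Q : Matrix (Fin E) (Fin E) ℂ := 1 - P with hQdef
  have hQ2 : Q * Q = Q := by
    simp only [hQdef, mul_sub, sub_mul, one_mul, mul_one, hP2]
    abel
  have hPQ : P * Q = 0 := by
    simp only [hQdef, mul_sub, mul_one, hP2]; abel
  have hQP : Q * P = 0 := by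
    simp only [hQdef, sub_mul, one_mul, hP2]; abel
  have hQL : Q * L = L := by
    nth_rewrite 1 [← hLP]
    rw [← mul_assoc, ← mul_assoc, hQ2]
    exact hLP
  have hLQ : L * Q = L := by
    nth_rewrite 1 [← hLP]
    rw [mul_assoc (Q * L) Q Q, hQ2]
    exact hLP
  have hPL : P * L = 0 := by
    rw [← hQL, ← mul_assoc, hPQ, zero_mul]
  have hLP0 : L * P = 0 := by
    rw [← hLQ, mul_assoc, hQP, mul_zero]
  set z : ℝ → ℂ := fun k => (Complex.I * (k : ℂ))⁻¹ with hzdef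
  -- z → 0
  have hz0 : Tendsto z atTop (nhds 0) := by
    have h1 : Tendsto (fun k : ℝ => (k : ℂ)⁻¹) atTop (nhds 0) := by
      have := tendsto_inv_atTop_zero (𝕜 := ℝ)
      have h2 := (Complex.continuous_ofReal.tendsto 0).comp this
      simpa [Function.comp_def, Complex.ofReal_inv] using h2
    have := h1.const_mul (Complex.I)⁻¹
    simp only [mul_zero] at this
    refine this.congr fun k => ?_
    simp only [hzdef, mul_inv]
  have hA : Tendsto (fun k : ℝ => (1 : Matrix (Fin E) (Fin E) ℂ) + z k • L)
      atTop (nhds 1) := by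
    have := (tendsto_const_nhds (x := (1 : Matrix (Fin E) (Fin E) ℂ))
      (f := atTop)).add (hz0.smul_const L)
    simpa using this
  have hdet : Tendsto (fun k : ℝ => ((1 : Matrix (Fin E) (Fin E) ℂ) + z k • L).det)
      atTop (nhds 1) := by
    have hcont : Continuous fun A : Matrix (Fin E) (Fin E) ℂ => A.det :=
      Continuous.matrix_det continuous_id
    have := (hcont.tendsto 1).comp hA
    simpa [Function.comp_def] using this
  have hdet_ne : ∀ᶠ k : ℝ in atTop,
      ((1 : Matrix (Fin E) (Fin E) ℂ) + z k • L).det ≠ 0 :=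
    hdet.eventually_ne one_ne_zero
  have hpos : ∀ᶠ k : ℝ in atTop, (0 : ℝ) < k := eventually_gt_atTop 0
  -- eventual equality with the explicit formula
  have heq : ∀ᶠ k : ℝ in atTop,
      -((P + L + (Complex.I * (k : ℂ)) • (1 - P))⁻¹
          * (P + L - (Complex.I * (k : ℂ)) • (1 - P)))
        = ((1 : Matrix (Fin E) (Fin E) ℂ) + z k • L)⁻¹
            * (1 - 2 • P - z k • L) := by
    filter_upwards [hdet_ne, hpos] with k hdk hk
    set c : ℂ := Complex.I * (k : ℂ) with hcdef
    have hc : c ≠ 0 :=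
      mul_ne_zero Complex.I_ne_zero (by exact_mod_cast hk.ne')
    have hcz : c * z k = 1 := mul_inv_cancel₀ hc
    have hzc : z k * c = 1 := inv_mul_cancel₀ hc
    set A : Matrix (Fin E) (Fin E) ℂ := 1 + z k • L with hAdef
    have hfact : P + L + c • Q = (P + c • Q) * A := by
      rw [hAdef]
      simp only [mul_add, add_mul, mul_sub, sub_mul, mul_one, one_mul,
        Matrix.mul_smul, Matrix.smul_mul, smul_smul, hP2, hPL, hPQ, hQP, hQL,
        hQ2, hzc, hcz, one_smul, smul_zero, mul_zero, zero_mul]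
      abel
    have hinv : (P + L + c • Q)⁻¹ = A⁻¹ * (P + z k • Q) := by
      apply Matrix.inv_eq_right_inv
      rw [hfact, mul_assoc, ← mul_assoc A,
        Matrix.mul_nonsing_inv _ (isUnit_iff_ne_zero.mpr hdk), one_mul]
      simp only [mul_add, add_mul, Matrix.mul_smul, Matrix.smul_mul, smul_smul,
        hP2, hPQ, hQP, hQ2, hzc, hcz, one_smul, smul_zero, mul_zero, zero_mul]
      simp [hQdef]
    have hmul : (P + z k • Q) * (P + L - c • Q) = P + z k • L - Q := by
      simp only [mul_add, add_mul, mul_sub, sub_mul, Matrix.mul_smul,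
        Matrix.smul_mul, smul_smul, hP2, hPL, hPQ, hQP, hQL, hQ2, hzc, hcz,
        one_smul, smul_zero, mul_zero, zero_mul]
      abel
    rw [hinv, mul_assoc, hmul, ← mul_neg]
    congr 1
    rw [hQdef]
    abel
  -- limit of the explicit formula
  have hRinv : ContinuousAt (Ring.inverse : ℂ → ℂ)
      ((1 : Matrix (Fin E) (Fin E) ℂ)).det := by
    rw [Matrix.det_one, Ring.inverse_eq_inv']
    exact continuousAt_inv₀ one_ne_zero
  have hAinv : Tendsto (fun k : ℝ => ((1 : Matrix (Fin E) (Fin E) ℂ) + z k • L)⁻¹)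
      atTop (nhds 1) := by
    have := (continuousAt_matrix_inv (1 : Matrix (Fin E) (Fin E) ℂ) hRinv).tendsto.comp hA
    simpa [Function.comp_def] using this
  have hsnd : Tendsto (fun k : ℝ => (1 : Matrix (Fin E) (Fin E) ℂ) - 2 • P - z k • L)
      atTop (nhds (1 - 2 • P)) := by
    have := (tendsto_const_nhds (x := (1 : Matrix (Fin E) (Fin E) ℂ) - 2 • P)
      (f := atTop)).sub (hz0.smul_const L)
    simpa using this
  have hfinal := hAinv.mul hsnd
  rw [one_mul] at hfinal
  exact hfinal.congr' (Filter.EventuallyEq.symm heq)
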